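/- arXiv:2206.00939 — 6 statements merged into one kernel-verified Lean document; each statement's English description precedes it below -/
import Mathlib

section
/- Let a, w : ℝ → ℝ × ℝ^d be differentiable functions satisfying a'(t) = ⟨D(t), w(t)⟩ and w'(t) = D(t) · a(t) for some vector-valued function D : ℝ → ℝ^d. Then for all t ≥ 0, a(t)² - ‖w(t)‖² = a(0)² - ‖w(0)‖² (the balancedness invariant). -/
open RealInnerProductSpace

/-- Balancedness invariant: if `a' = ⟪D, w⟫` and `w' = a • D`, then
`a(t)² - ‖w(t)‖²` is conserved. -/
theorem balancedness_invariant {d : ℕ}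
    (a : ℝ → ℝ) (w : ℝ → EuclideanSpace ℝ (Fin d))
    (D : ℝ → EuclideanSpace ℝ (Fin d))
    (ha : ∀ t, HasDerivAt a (⟪D t, w t⟫) t)
    (hw : ∀ t, HasDerivAt w (a t • D t) t) :
    ∀ t ≥ (0 : ℝ), (a t) ^ 2 - ‖w t‖ ^ 2 = (a 0) ^ 2 - ‖w 0‖ ^ 2 := by
  have key : ∀ t, HasDerivAt (fun t => (a t) ^ 2 - ⟪w t, w t⟫) 0 t := by
    intro t
    have h1 : HasDerivAt (fun t => (a t) ^ 2) (2 * a t * ⟪D t, w t⟫) t := by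
      simpa [mul_comm] using ((ha t).fun_pow 2)
    have h2 : HasDerivAt (fun t => ⟪w t, w t⟫)
        (⟪w t, a t • D t⟫ + ⟪a t • D t, w t⟫) t := (hw t).inner ℝ (hw t)
    have := h1.fun_sub h2
    refine this.congr_deriv ?_
    rw [real_inner_smul_left, real_inner_smul_right, real_inner_comm (w t) (D t)]
    ring
  have hconst : ∀ t : ℝ, (a t) ^ 2 - ⟪w t, w t⟫ = (a 0) ^ 2 - ⟪w 0, w 0⟫ := by
    intro t
    exact is_const_of_deriv_eq_zero (fun x => (key x).differentiableAt)
      (fun x => (key x).deriv) t 0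
  intro t _
  have := hconst t
  simp only [real_inner_self_eq_norm_sq] at this; exact this
end

section
/- Let a, w be differentiable functions satisfying a'(t) = ⟨D(t), w(t)⟩ and w'(t) = D(t) a(t). If |a(0)| = ‖w(0)‖ > 0 and a(0) > 0, then for all t ≥ 0, a(t) = ‖w(t)‖ > 0. -/
open RealInnerProductSpace

/-- Preservation of balancedness and positivity: if `a' = ⟪D, w⟫`, `w' = a • D`,
and `a(0) = ‖w(0)‖ > 0`, then `a(t) = ‖w(t)‖ > 0` for all `t ≥ 0`. -/
theorem balanced_positive_preserved {d : ℕ}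
    (a : ℝ → ℝ) (w : ℝ → EuclideanSpace ℝ (Fin d))
    (D : ℝ → EuclideanSpace ℝ (Fin d)) (hD : Continuous D)
    (ha : ∀ t, HasDerivAt a (⟪D t, w t⟫) t)
    (hw : ∀ t, HasDerivAt w (a t • D t) t)
    (hbal : a 0 = ‖w 0‖) (hpos : 0 < a 0) :
    ∀ t ≥ (0 : ℝ), a t = ‖w t‖ ∧ 0 < a t := by
  -- g t = a t ^ 2 - ⟪w t, w t⟫ is constant (derivative 0)
  set g : ℝ → ℝ := fun t => a t ^ 2 - ⟪w t, w t⟫ with hg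
  have hg' : ∀ t, HasDerivAt g 0 t := by
    intro t
    have h1 : HasDerivAt (fun t => a t ^ 2) (2 * a t * ⟪D t, w t⟫) t := by
      simpa [mul_comm, mul_assoc, Pi.pow_def] using ((ha t).pow 2)
    have h2 : HasDerivAt (fun t => ⟪w t, w t⟫)
        (⟪w t, a t • D t⟫ + ⟪a t • D t, w t⟫) t :=
      (hw t).inner ℝ (hw t)
    have := h1.sub h2
    have heq : 2 * a t * ⟪D t, w t⟫ - (⟪w t, a t • D t⟫ + ⟪a t • D t, w t⟫) = 0 := by
      rw [real_inner_smul_left, real_inner_smul_right, real_inner_comm (w t) (D t)]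
      ring
    rw [heq] at this
    exact this
  have hgc : ∀ t, g t = g 0 := by
    intro t
    exact is_const_of_deriv_eq_zero (fun x => (hg' x).differentiableAt)
      (fun x => (hg' x).deriv) t 0
  have hsq : ∀ t, a t ^ 2 = ‖w t‖ ^ 2 := by
    intro t
    have := hgc t
    simp only [hg, real_inner_self_eq_norm_sq] at this
    nlinarith [this]
  -- continuity of a
  have hacont : Continuous a :=
    continuous_iff_continuousAt.mpr fun t => (ha t).continuousAt
  -- main: a never vanishes on [0, t]
  intro t ht
  -- bound for ‖D‖ on [0, t]
  obtain ⟨C, hC⟩ : ∃ C, ∀ s ∈ Set.Icc (0:ℝ) t, ‖D s‖ ≤ C := by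
    obtain ⟨C, hC⟩ := (isCompact_Icc (a := (0:ℝ)) (b := t)).exists_bound_of_continuousOn
      (hD.norm.continuousOn)
    refine ⟨C, fun s hs => ?_⟩
    simpa using hC s hs
  have hCpos : 0 ≤ C := le_trans (norm_nonneg _) (hC 0 ⟨le_refl _, ht⟩)
  -- φ s = a s ^ 2 * exp (2 C s) is monotone on [0, t]
  set φ : ℝ → ℝ := fun s => a s ^ 2 * Real.exp (2 * C * s) with hφ
  have hφd : ∀ s, HasDerivAt φ
      ((2 * a s * ⟪D s, w s⟫ + a s ^ 2 * (2 * C)) * Real.exp (2 * C * s)) s := by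
    intro s
    have h1 : HasDerivAt (fun s => a s ^ 2) (2 * a s * ⟪D s, w s⟫) s := by
      simpa [mul_comm, mul_assoc, Pi.pow_def] using ((ha s).pow 2)
    have h2 : HasDerivAt (fun s => Real.exp (2 * C * s)) (2 * C * Real.exp (2 * C * s)) s := by
      simpa [mul_comm] using ((hasDerivAt_id s).const_mul (2 * C)).exp
    have := h1.mul h2
    convert this using 1
    · rfl
    · rfl
    · rfl
    ring
  have hmono : MonotoneOn φ (Set.Icc 0 t) := by
    apply monotoneOn_of_deriv_nonneg (convex_Icc 0 t)
    · exact Continuous.continuousOn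
        ((hacont.pow 2).mul (Real.continuous_exp.comp (continuous_const.mul continuous_id)))
    · intro s _
      exact (hφd s).differentiableAt.differentiableWithinAt
    · intro s hs
      rw [(hφd s).deriv]
      have hs' : s ∈ Set.Icc (0:ℝ) t := interior_subset hs
      have habs : |a s| = ‖w s‖ := by
        have := hsq s
        nlinarith [abs_nonneg (a s), norm_nonneg (w s), sq_abs (a s)]
      have hbd : |⟪D s, w s⟫| ≤ C * ‖w s‖ :=
        le_trans (abs_real_inner_le_norm _ _)
          (mul_le_mul_of_nonneg_right (hC s hs') (norm_nonneg _))
      have key : 2 * a s * ⟪D s, w s⟫ + a s ^ 2 * (2 * C) ≥ 0 := by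
        have h1 : 2 * a s * ⟪D s, w s⟫ ≥ -(2 * |a s| * |⟪D s, w s⟫|) := by
          have e : |2 * a s * ⟪D s, w s⟫| = 2 * |a s| * |⟪D s, w s⟫| := by
            rw [abs_mul, abs_mul, abs_two]
          linarith [neg_abs_le (2 * a s * ⟪D s, w s⟫)]
        have h2 : 2 * |a s| * |⟪D s, w s⟫| ≤ 2 * |a s| * (C * ‖w s‖) := by
          have : (0:ℝ) ≤ 2 * |a s| := by positivity
          exact mul_le_mul_of_nonneg_left hbd this
        have h3 : 2 * |a s| * (C * ‖w s‖) = a s ^ 2 * (2 * C) := by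
          rw [← habs]
          rw [← sq_abs (a s)]
          ring
        nlinarith
      positivity
  -- a never vanishes on [0, t]
  have hne : ∀ s ∈ Set.Icc (0:ℝ) t, a s ≠ 0 := by
    intro s hs h0
    have h1 : φ 0 ≤ φ s := hmono ⟨le_refl _, ht⟩ hs hs.1
    have : φ s = 0 := by simp [hφ, h0]
    have hφ0 : 0 < φ 0 := by
      simp only [hφ]
      positivity
    linarith
  have hat : 0 < a t := by
    rcases lt_trichotomy (a t) 0 with h | h | h
    · -- IVT contradiction
      have : (0:ℝ) ∈ Set.Icc (a t) (a 0) := ⟨le_of_lt h, le_of_lt hpos⟩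
      obtain ⟨s, hs, hs0⟩ := intermediate_value_Icc' ht hacont.continuousOn this
      exact absurd hs0 (hne s hs)
    · exact absurd h (hne t ⟨ht, le_refl _⟩)
    · exact h
  refine ⟨?_, hat⟩
  have := hsq t
  nlinarith [norm_nonneg (w t)]
end

section
/- Let f : [0,∞) → ℝ be differentiable with f'(t) ≥ a² - f(t)² for all t, where a > 0, and suppose 0 ≤ f(0) < a. Then for all t ≥ 0, f(t) ≥ a·tanh(a·t). -/
open Real Set

lemma tanh_hasDerivAt' (x : ℝ) : HasDerivAt Real.tanh (1 - Real.tanh x ^ 2) x := by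
  have h : HasDerivAt (fun y => Real.sinh y / Real.cosh y)
      ((Real.cosh x * Real.cosh x - Real.sinh x * Real.sinh x) / Real.cosh x ^ 2) x :=
    (Real.hasDerivAt_sinh x).div (Real.hasDerivAt_cosh x) (Real.cosh_pos x).ne'
  have heq : Real.tanh = fun y => Real.sinh y / Real.cosh y := by
    funext y; exact Real.tanh_eq_sinh_div_cosh y
  rw [heq]
  convert h using 1
  have hc := (Real.cosh_pos x).ne'
  show 1 - (Real.sinh x / Real.cosh x) ^ 2 = _
  field_simp

lemma tanh_nonneg' {x : ℝ} (hx : 0 ≤ x) : 0 ≤ Real.tanh x := by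
  rw [Real.tanh_eq_sinh_div_cosh]
  exact div_nonneg (Real.sinh_nonneg_iff.mpr hx) (Real.cosh_pos x).le

/-- Grönwall comparison with the tanh solution: if `f' ≥ a² - f²` on `[0,∞)`,
`a > 0` and `0 ≤ f(0) < a`, then `f(t) ≥ a tanh(a t)` for all `t ≥ 0`. -/
theorem tanh_comparison (a : ℝ) (ha : 0 < a) (f f' : ℝ → ℝ)
    (hderiv : ∀ t ≥ (0 : ℝ), HasDerivAt f (f' t) t)
    (hineq : ∀ t ≥ (0 : ℝ), f' t ≥ a ^ 2 - (f t) ^ 2)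
    (h0 : 0 ≤ f 0) (h0' : f 0 < a) :
    ∀ t ≥ (0 : ℝ), f t ≥ a * Real.tanh (a * t) := by
  set g : ℝ → ℝ := fun x => a * Real.tanh (a * x) with hg_def
  have hg : ∀ x : ℝ, HasDerivAt g (a ^ 2 - g x ^ 2) x := by
    intro x
    have h1 : HasDerivAt (fun y : ℝ => a * y) a x := (hasDerivAt_id x).const_mul a |>.congr_deriv (by ring)
    have h2 : HasDerivAt (fun y => Real.tanh (a * y)) ((1 - Real.tanh (a * x) ^ 2) * a) x :=
      (tanh_hasDerivAt' (a * x)).comp x h1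
    have h3 : HasDerivAt g (a * ((1 - Real.tanh (a * x) ^ 2) * a)) x := h2.const_mul a
    convert h3 using 1
    simp only [hg_def]
    ring
  intro t ht
  rw [ge_iff_le, ← sub_nonpos]
  show g t - f t ≤ 0
  have key : ∀ δ > (0 : ℝ), g t - f t ≤ δ := by
    intro δ hδ
    set ε : ℝ := min (δ * Real.exp (-t)) (Real.exp (-t) / 2) with hε_def
    have hε : 0 < ε := lt_min (by positivity) (by positivity)
    have hεδ : ε * Real.exp t ≤ δ := by
      calc ε * Real.exp t ≤ δ * Real.exp (-t) * Real.exp t :=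
            mul_le_mul_of_nonneg_right (min_le_left _ _) (Real.exp_pos t).le
        _ = δ := by rw [mul_assoc, ← Real.exp_add]; simp
    have main : ∀ ⦃x⦄, x ∈ Icc (0:ℝ) t → g x - f x ≤ ε * Real.exp x := by
      apply image_le_of_deriv_right_lt_deriv_boundary
        (f := fun x => g x - f x) (f' := fun x => (a ^ 2 - g x ^ 2) - f' x)
        (B := fun x => ε * Real.exp x) (B' := fun x => ε * Real.exp x)
      · intro x hx
        exact ((hg x).sub (hderiv x hx.1)).continuousAt.continuousWithinAt
      · intro x hx
        exact ((hg x).sub (hderiv x hx.1)).hasDerivWithinAt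
      · simp only [hg_def, mul_zero, Real.tanh_zero, Real.exp_zero, mul_one]
        nlinarith
      · intro x
        exact (Real.hasDerivAt_exp x).const_mul ε
      · intro x hx hfB
        have hx0 : 0 ≤ x := hx.1
        have hxt : x < t := hx.2
        have hgx : 0 ≤ g x := mul_nonneg ha.le (tanh_nonneg' (by positivity))
        have hexp : 0 < Real.exp x := Real.exp_pos x
        have hsmall : ε * Real.exp x < 1 / 2 := by
          have h1 : ε ≤ Real.exp (-t) / 2 := min_le_right _ _
          have h2 : Real.exp x < Real.exp t := Real.exp_lt_exp.mpr hxt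
          have h3 : Real.exp (-t) * Real.exp t = 1 := by rw [← Real.exp_add]; simp
          nlinarith [Real.exp_pos t, Real.exp_pos (-t)]
        have hf := hineq x hx0
        have hεe : 0 < ε * Real.exp x := mul_pos hε hexp
        have hfx : f x = g x - ε * Real.exp x := by linarith
        have h1 : f x ^ 2 - g x ^ 2 =
            -(2 * g x) * (ε * Real.exp x) + (ε * Real.exp x) ^ 2 := by rw [hfx]; ring
        have h2 : (ε * Real.exp x) ^ 2 < ε * Real.exp x := by nlinarith
        have h3 : 0 ≤ 2 * g x * (ε * Real.exp x) := by positivity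
        linarith
    have := main (right_mem_Icc.mpr ht)
    linarith
  linarith [le_of_forall_pos_le_add (by intro δ hδ; linarith [key δ hδ] : ∀ δ > (0:ℝ), g t - f t ≤ 0 + δ)]
end

section
/- Let (x_k)_{k=1}^n be an orthonormal family in ℝ^d, y ∈ ℝⁿ with all y_k ≠ 0 and with at least one positive and one negative entry. Define D_+ = (1/n)Σ_{k: y_k>0} y_k x_k and D_- = (1/n)Σ_{k: y_k<0} y_k x_k. For m ≥ 2, consider the network θ = (a, W) with w_1 = √(n/‖D_+‖)·D_+, w_2 = -√(n/‖D_-‖)·D_-, w_j = 0 for j ≥ 3, and a_1 = √(n‖D_+‖), a_2 = -√(n‖D_-‖), a_j = 0 for j ≥ 3. Then h_θ(x_k) = y_k for all k, i.e. θ interpolates the data, and ‖θ‖² = 2n(‖D_+‖ + ‖D_-‖). -/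
open RealInnerProductSpace Finset

/-- The explicit two-neuron network built from `D₊` and `D₋` interpolates the
data and has squared norm `2n(‖D₊‖ + ‖D₋‖)`. -/
theorem two_neuron_interpolator {d n m : ℕ}
    (x : Fin n → EuclideanSpace ℝ (Fin d)) (y : Fin n → ℝ)
    (hortho : ∀ k k', ⟪x k, x k'⟫ = if k = k' then (1 : ℝ) else 0)
    (hy : ∀ k, y k ≠ 0)
    (hpos : ∃ k, 0 < y k) (hneg : ∃ k, y k < 0)
    (hn : 0 < n) (hm : 2 ≤ m)
    (Dp Dm : EuclideanSpace ℝ (Fin d))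
    (hDp : Dp = (1 / (n : ℝ)) • ∑ k ∈ univ.filter (fun k => 0 < y k), y k • x k)
    (hDm : Dm = (1 / (n : ℝ)) • ∑ k ∈ univ.filter (fun k => y k < 0), y k • x k)
    (a : Fin m → ℝ) (w : Fin m → EuclideanSpace ℝ (Fin d))
    (hw0 : ∀ j : Fin m, (j : ℕ) = 0 → w j = Real.sqrt ((n : ℝ) / ‖Dp‖) • Dp)
    (hw1 : ∀ j : Fin m, (j : ℕ) = 1 → w j = -(Real.sqrt ((n : ℝ) / ‖Dm‖)) • Dm)
    (hwj : ∀ j : Fin m, 2 ≤ (j : ℕ) → w j = 0)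
    (ha0 : ∀ j : Fin m, (j : ℕ) = 0 → a j = Real.sqrt ((n : ℝ) * ‖Dp‖))
    (ha1 : ∀ j : Fin m, (j : ℕ) = 1 → a j = -Real.sqrt ((n : ℝ) * ‖Dm‖))
    (haj : ∀ j : Fin m, 2 ≤ (j : ℕ) → a j = 0) :
    (∀ k, ∑ j, a j * max 0 ⟪w j, x k⟫ = y k) ∧
    (∑ j, (a j) ^ 2) + (∑ j, ‖w j‖ ^ 2) = 2 * n * (‖Dp‖ + ‖Dm‖) := by
  have hn' : (0 : ℝ) < n := by exact_mod_cast hn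
  -- inner products with Dp and Dm
  have hipP : ∀ k, ⟪Dp, x k⟫ = if 0 < y k then y k / n else 0 := by
    intro k
    rw [hDp, real_inner_smul_left, sum_inner]
    have : ∀ k' ∈ univ.filter (fun k => 0 < y k),
        (⟪y k' • x k', x k⟫ : ℝ) = if k' = k then y k' else 0 := by
      intro k' _
      rw [real_inner_smul_left, hortho]
      split <;> ring
    rw [Finset.sum_congr rfl this, Finset.sum_ite_eq']
    simp only [mem_filter, mem_univ, true_and]
    split <;> field_simp <;> simp
  have hipM : ∀ k, ⟪Dm, x k⟫ = if y k < 0 then y k / n else 0 := by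
    intro k
    rw [hDm, real_inner_smul_left, sum_inner]
    have : ∀ k' ∈ univ.filter (fun k => y k < 0),
        (⟪y k' • x k', x k⟫ : ℝ) = if k' = k then y k' else 0 := by
      intro k' _
      rw [real_inner_smul_left, hortho]
      split <;> ring
    rw [Finset.sum_congr rfl this, Finset.sum_ite_eq']
    simp only [mem_filter, mem_univ, true_and]
    split <;> field_simp <;> simp
  -- positivity of norms
  have hDpPos : 0 < ‖Dp‖ := by
    obtain ⟨k, hk⟩ := hpos
    have h1 : ⟪Dp, x k⟫ ≠ 0 := by
      rw [hipP k, if_pos hk]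
      exact ne_of_gt (div_pos hk hn')
    have hne : Dp ≠ 0 := fun h => h1 (by simp [h])
    simpa [norm_pos_iff] using hne
  have hDmPos : 0 < ‖Dm‖ := by
    obtain ⟨k, hk⟩ := hneg
    have h1 : ⟪Dm, x k⟫ ≠ 0 := by
      rw [hipM k, if_pos hk]
      exact div_ne_zero (hy k) (ne_of_gt hn')
    have hne : Dm ≠ 0 := fun h => h1 (by simp [h])
    simpa [norm_pos_iff] using hne
  -- the two indices
  set j0 : Fin m := ⟨0, by omega⟩ with hj0
  set j1 : Fin m := ⟨1, by omega⟩ with hj1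
  have hj01 : j0 ≠ j1 := by simp [hj0, hj1, Fin.ext_iff]
  have hwj0 := hw0 j0 rfl
  have hwj1 := hw1 j1 rfl
  have haj0 := ha0 j0 rfl
  have haj1 := ha1 j1 rfl
  have hsqP : Real.sqrt ((n : ℝ) * ‖Dp‖) * Real.sqrt ((n : ℝ) / ‖Dp‖) = n := by
    rw [← Real.sqrt_mul (by positivity)]
    have : (n : ℝ) * ‖Dp‖ * ((n : ℝ) / ‖Dp‖) = n ^ 2 := by
      field_simp
    rw [this, Real.sqrt_sq hn'.le]
  have hsqM : Real.sqrt ((n : ℝ) * ‖Dm‖) * Real.sqrt ((n : ℝ) / ‖Dm‖) = n := by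
    rw [← Real.sqrt_mul (by positivity)]
    have : (n : ℝ) * ‖Dm‖ * ((n : ℝ) / ‖Dm‖) = n ^ 2 := by
      field_simp
    rw [this, Real.sqrt_sq hn'.le]
  constructor
  · intro k
    have hsplit : ∑ j, a j * max 0 ⟪w j, x k⟫
        = a j0 * max 0 ⟪w j0, x k⟫ + a j1 * max 0 ⟪w j1, x k⟫ := by
      apply Finset.sum_eq_add j0 j1 hj01
      · intro c _ ⟨hc0, hc1⟩
        have hc : 2 ≤ (c : ℕ) := by
          rcases Nat.lt_or_ge (c : ℕ) 2 with h | h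
          · interval_cases h' : (c : ℕ)
            · exact absurd (Fin.ext h') hc0
            · exact absurd (Fin.ext h') hc1
          · exact h
        rw [haj c hc]; ring
      · intro h; exact absurd (mem_univ j0) h
      · intro h; exact absurd (mem_univ j1) h
    rw [hsplit, hwj0, hwj1, haj0, haj1, real_inner_smul_left, real_inner_smul_left,
      hipP, hipM]
    rcases lt_or_gt_of_ne (hy k) with hk | hk
    · rw [if_neg (by linarith), if_pos hk]
      rw [mul_zero, max_self, mul_zero, zero_add]
      have h1 : (0:ℝ) ≤ -Real.sqrt ((n : ℝ) / ‖Dm‖) * (y k / n) := by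
        have : y k / n < 0 := div_neg_of_neg_of_pos hk hn'
        nlinarith [Real.sqrt_nonneg ((n : ℝ) / ‖Dm‖)]
      rw [max_eq_right h1]
      have : -Real.sqrt ((n : ℝ) * ‖Dm‖) * (-Real.sqrt ((n : ℝ) / ‖Dm‖) * (y k / n))
          = (Real.sqrt ((n : ℝ) * ‖Dm‖) * Real.sqrt ((n : ℝ) / ‖Dm‖)) * (y k / n) := by ring
      rw [this, hsqM]
      field_simp
    · rw [if_pos hk, if_neg (by linarith)]
      rw [mul_zero, max_self, mul_zero, add_zero]
      have h1 : (0:ℝ) ≤ Real.sqrt ((n : ℝ) / ‖Dp‖) * (y k / n) := by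
        have : 0 ≤ y k / n := le_of_lt (div_pos hk hn')
        positivity
      rw [max_eq_right h1]
      have : Real.sqrt ((n : ℝ) * ‖Dp‖) * (Real.sqrt ((n : ℝ) / ‖Dp‖) * (y k / n))
          = (Real.sqrt ((n : ℝ) * ‖Dp‖) * Real.sqrt ((n : ℝ) / ‖Dp‖)) * (y k / n) := by ring
      rw [this, hsqP]
      field_simp
  · have hA : ∑ j, (a j) ^ 2 = (a j0) ^ 2 + (a j1) ^ 2 := by
      apply Finset.sum_eq_add j0 j1 hj01
      · intro c _ ⟨hc0, hc1⟩
        have hc : 2 ≤ (c : ℕ) := by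
          rcases Nat.lt_or_ge (c : ℕ) 2 with h | h
          · interval_cases h' : (c : ℕ)
            · exact absurd (Fin.ext h') hc0
            · exact absurd (Fin.ext h') hc1
          · exact h
        rw [haj c hc]; ring
      · intro h; exact absurd (mem_univ j0) h
      · intro h; exact absurd (mem_univ j1) h
    have hW : ∑ j, ‖w j‖ ^ 2 = ‖w j0‖ ^ 2 + ‖w j1‖ ^ 2 := by
      apply Finset.sum_eq_add j0 j1 hj01
      · intro c _ ⟨hc0, hc1⟩
        have hc : 2 ≤ (c : ℕ) := by
          rcases Nat.lt_or_ge (c : ℕ) 2 with h | h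
          · interval_cases h' : (c : ℕ)
            · exact absurd (Fin.ext h') hc0
            · exact absurd (Fin.ext h') hc1
          · exact h
        rw [hwj c hc]; simp
      · intro h; exact absurd (mem_univ j0) h
      · intro h; exact absurd (mem_univ j1) h
    rw [hA, hW, haj0, haj1, hwj0, hwj1]
    have e1 : Real.sqrt ((n : ℝ) * ‖Dp‖) ^ 2 = n * ‖Dp‖ := Real.sq_sqrt (by positivity)
    have e2 : (-Real.sqrt ((n : ℝ) * ‖Dm‖)) ^ 2 = n * ‖Dm‖ := by
      rw [neg_sq]; exact Real.sq_sqrt (by positivity)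
    have e3 : ‖Real.sqrt ((n : ℝ) / ‖Dp‖) • Dp‖ ^ 2 = n * ‖Dp‖ := by
      rw [norm_smul, mul_pow, Real.norm_eq_abs, sq_abs,
        Real.sq_sqrt (by positivity)]
      field_simp
    have e4 : ‖(-Real.sqrt ((n : ℝ) / ‖Dm‖)) • Dm‖ ^ 2 = n * ‖Dm‖ := by
      rw [norm_smul, mul_pow, Real.norm_eq_abs, abs_neg, sq_abs,
        Real.sq_sqrt (by positivity)]
      field_simp
    rw [e1, e2, e3, e4]; ring
end

section
/- With orthonormal inputs (x_k) and labels y with all y_k ≠ 0 and both signs present, any balanced interpolating network θ = (a, W) (i.e. L(θ) = 0 and |a_j| = ‖w_j‖ for all j) satisfies ‖θ‖² ≥ 2n(‖D_+‖ + ‖D_-‖), where D_± are as before. Consequently the minimum of ‖θ‖² over interpolating networks equals 2n(‖D_+‖ + ‖D_-‖) = 2√(Σ_{k: y_k>0} y_k²) + 2√(Σ_{k: y_k<0} y_k²). -/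
open RealInnerProductSpace Finset

lemma norm_combo_sq {d n : ℕ} (x : Fin n → EuclideanSpace ℝ (Fin d))
    (hortho : ∀ k k', ⟪x k, x k'⟫ = if k = k' then (1 : ℝ) else 0)
    (c : Fin n → ℝ) (s : Finset (Fin n)) :
    ‖∑ k ∈ s, c k • x k‖ ^ 2 = ∑ k ∈ s, c k ^ 2 := by
  rw [← real_inner_self_eq_norm_sq, inner_sum]
  simp_rw [sum_inner, inner_smul_left, inner_smul_right, hortho]
  simp [mul_ite, Finset.sum_ite_eq, sq]

/-- Any balanced interpolating one-hidden-layer ReLU network over orthonormal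
data has squared parameter norm at least `2n(‖D₊‖ + ‖D₋‖)`, and this constant
equals `2√(Σ_{y_k>0} y_k²) + 2√(Σ_{y_k<0} y_k²)`. -/
theorem minimal_norm_lower_bound {d n m : ℕ}
    (x : Fin n → EuclideanSpace ℝ (Fin d)) (y : Fin n → ℝ)
    (hortho : ∀ k k', ⟪x k, x k'⟫ = if k = k' then (1 : ℝ) else 0)
    (hy : ∀ k, y k ≠ 0)
    (hpos : ∃ k, 0 < y k) (hneg : ∃ k, y k < 0)
    (hn : 0 < n)
    (Dp Dm : EuclideanSpace ℝ (Fin d))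
    (hDp : Dp = (1 / (n : ℝ)) • ∑ k ∈ univ.filter (fun k => 0 < y k), y k • x k)
    (hDm : Dm = (1 / (n : ℝ)) • ∑ k ∈ univ.filter (fun k => y k < 0), y k • x k)
    (a : Fin m → ℝ) (w : Fin m → EuclideanSpace ℝ (Fin d))
    (hbal : ∀ j, |a j| = ‖w j‖)
    (hinterp : ∀ k, ∑ j, a j * max 0 ⟪w j, x k⟫ = y k) :
    (∑ j, (a j) ^ 2) + (∑ j, ‖w j‖ ^ 2) ≥ 2 * n * (‖Dp‖ + ‖Dm‖) ∧
    2 * n * (‖Dp‖ + ‖Dm‖) =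
      2 * Real.sqrt (∑ k ∈ univ.filter (fun k => 0 < y k), (y k) ^ 2) +
      2 * Real.sqrt (∑ k ∈ univ.filter (fun k => y k < 0), (y k) ^ 2) := by
  classical
  set A := univ.filter (fun k => 0 < y k) with hA
  set B := univ.filter (fun k => y k < 0) with hB
  set Sp := ∑ k ∈ A, (y k) ^ 2 with hSp
  set Sm := ∑ k ∈ B, (y k) ^ 2 with hSm
  have hon : Orthonormal ℝ x := orthonormal_iff_ite.mpr hortho
  have hnpos : (0 : ℝ) < n := by exact_mod_cast hn
  have hDpn : ‖Dp‖ = (1 / (n : ℝ)) * Real.sqrt Sp := by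
    rw [hDp, norm_smul, Real.norm_eq_abs, abs_of_pos (by positivity), hSp,
      ← norm_combo_sq x hortho y A, Real.sqrt_sq (norm_nonneg _)]
  have hDmn : ‖Dm‖ = (1 / (n : ℝ)) * Real.sqrt Sm := by
    rw [hDm, norm_smul, Real.norm_eq_abs, abs_of_pos (by positivity), hSm,
      ← norm_combo_sq x hortho y B, Real.sqrt_sq (norm_nonneg _)]
  have hconst : 2 * n * (‖Dp‖ + ‖Dm‖) = 2 * Real.sqrt Sp + 2 * Real.sqrt Sm := by
    rw [hDpn, hDmn]; field_simp
  refine ⟨?_, hconst⟩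
  rw [hconst]
  -- Bessel + Cauchy-Schwarz bound for each neuron on each subset
  have key : ∀ (s : Finset (Fin n)) (c : Fin n → ℝ) (j : Fin m),
      ∑ k ∈ s, c k * max 0 ⟪w j, x k⟫ ≤ Real.sqrt (∑ k ∈ s, (c k)^2) * ‖w j‖ := by
    intro s c j
    have hT : (∑ k ∈ s, c k * max 0 ⟪w j, x k⟫) ^ 2
        ≤ (∑ k ∈ s, (c k)^2) * ‖w j‖ ^ 2 := by
      calc (∑ k ∈ s, c k * max 0 ⟪w j, x k⟫) ^ 2
          ≤ (∑ k ∈ s, (c k)^2) * (∑ k ∈ s, (max 0 ⟪w j, x k⟫)^2) :=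
            Finset.sum_mul_sq_le_sq_mul_sq s _ _
        _ ≤ (∑ k ∈ s, (c k)^2) * ‖w j‖ ^ 2 := by
            refine mul_le_mul_of_nonneg_left ?_ (Finset.sum_nonneg fun k _ => sq_nonneg _)
            calc ∑ k ∈ s, (max 0 ⟪w j, x k⟫)^2
                ≤ ∑ k ∈ s, ⟪w j, x k⟫^2 := by
                  apply Finset.sum_le_sum
                  intro k _
                  rcases le_or_gt ⟪w j, x k⟫ 0 with h | h
                  · rw [max_eq_left h]; simpa using sq_nonneg ⟪w j, x k⟫
                  · rw [max_eq_right h.le]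
              _ = ∑ k ∈ s, ‖⟪x k, w j⟫‖^2 := by
                  simp_rw [real_inner_comm, Real.norm_eq_abs, sq_abs]
              _ ≤ ‖w j‖ ^ 2 := hon.sum_inner_products_le _
    calc ∑ k ∈ s, c k * max 0 ⟪w j, x k⟫
        ≤ Real.sqrt ((∑ k ∈ s, c k * max 0 ⟪w j, x k⟫) ^ 2) := by
          rw [Real.sqrt_sq_eq_abs]; exact le_abs_self _
      _ ≤ Real.sqrt ((∑ k ∈ s, (c k)^2) * ‖w j‖ ^ 2) := Real.sqrt_le_sqrt hT
      _ = Real.sqrt (∑ k ∈ s, (c k)^2) * ‖w j‖ := by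
          rw [Real.sqrt_mul (by positivity), Real.sqrt_sq (norm_nonneg _)]
  have Tnn : ∀ (s : Finset (Fin n)) (c : Fin n → ℝ) (j : Fin m),
      (∀ k ∈ s, 0 ≤ c k) → 0 ≤ ∑ k ∈ s, c k * max 0 ⟪w j, x k⟫ :=
    fun s c j hc => Finset.sum_nonneg fun k hk =>
      mul_nonneg (hc k hk) (le_max_left _ _)
  -- one-sided bound
  have side : ∀ (s : Finset (Fin n)) (c : Fin n → ℝ) (b : Fin m → ℝ),
      (∀ k ∈ s, 0 ≤ c k) →
      (∑ k ∈ s, (c k)^2) = ∑ j, b j * ∑ k ∈ s, c k * max 0 ⟪w j, x k⟫ →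
      0 < ∑ k ∈ s, (c k)^2 →
      Real.sqrt (∑ k ∈ s, (c k)^2) ≤ ∑ j, (max 0 (b j)) * ‖w j‖ := by
    intro s c b hc hid hSpos
    set S := ∑ k ∈ s, (c k)^2 with hSdef
    have hsq : Real.sqrt S * Real.sqrt S = S := Real.mul_self_sqrt hSpos.le
    have hsqpos : 0 < Real.sqrt S := Real.sqrt_pos.mpr hSpos
    have hstep : S ≤ Real.sqrt S * ∑ j, (max 0 (b j)) * ‖w j‖ := by
      conv_lhs => rw [hid]
      rw [Finset.mul_sum]
      apply Finset.sum_le_sum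
      intro j _
      rcases le_or_gt (b j) 0 with h | h
      · have hT := Tnn s c j hc
        have h1 : b j * ∑ k ∈ s, c k * max 0 ⟪w j, x k⟫ ≤ 0 :=
          mul_nonpos_of_nonpos_of_nonneg h hT
        rw [max_eq_left h]
        have h2 : (0:ℝ) ≤ Real.sqrt S * (0 * ‖w j‖) := by simp
        linarith
      · rw [max_eq_right h.le]
        calc b j * ∑ k ∈ s, c k * max 0 ⟪w j, x k⟫
            ≤ b j * (Real.sqrt S * ‖w j‖) :=
              mul_le_mul_of_nonneg_left (key s c j) h.le
          _ = Real.sqrt S * (b j * ‖w j‖) := by ring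
    have hmul : Real.sqrt S * Real.sqrt S ≤ Real.sqrt S * ∑ j, (max 0 (b j)) * ‖w j‖ := by
      rw [hsq]; exact hstep
    exact le_of_mul_le_mul_left hmul hsqpos
  -- identities from interpolation
  have hid : ∀ (s : Finset (Fin n)) (ε : ℝ),
      ∑ k ∈ s, (ε * y k) * (ε * y k) =
        ∑ j, (ε * a j) * ∑ k ∈ s, (ε * y k) * max 0 ⟪w j, x k⟫ := by
    intro s ε
    calc ∑ k ∈ s, (ε * y k) * (ε * y k)
        = ∑ k ∈ s, ∑ j, (ε * a j) * ((ε * y k) * max 0 ⟪w j, x k⟫) := by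
          apply Finset.sum_congr rfl
          intro k _
          have h := hinterp k
          calc (ε * y k) * (ε * y k)
              = ε^2 * ((∑ j, a j * max 0 ⟪w j, x k⟫) * y k) := by rw [h]; ring
            _ = ∑ j, (ε * a j) * ((ε * y k) * max 0 ⟪w j, x k⟫) := by
                rw [Finset.sum_mul, Finset.mul_sum]
                apply Finset.sum_congr rfl
                intro j _; ring
      _ = ∑ j, ∑ k ∈ s, (ε * a j) * ((ε * y k) * max 0 ⟪w j, x k⟫) := Finset.sum_comm
      _ = ∑ j, (ε * a j) * ∑ k ∈ s, (ε * y k) * max 0 ⟪w j, x k⟫ := by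
          simp_rw [Finset.mul_sum]
  have hSppos : 0 < Sp := by
    obtain ⟨k, hk⟩ := hpos
    have hkA : k ∈ A := by simp [hA, hk]
    have hle : (y k)^2 ≤ Sp :=
      Finset.single_le_sum (fun i _ => sq_nonneg (y i)) hkA
    nlinarith
  have hSmpos : 0 < Sm := by
    obtain ⟨k, hk⟩ := hneg
    have hkB : k ∈ B := by simp [hB, hk]
    have hle : (y k)^2 ≤ Sm :=
      Finset.single_le_sum (fun i _ => sq_nonneg (y i)) hkB
    nlinarith
  have h1 : Real.sqrt Sp ≤ ∑ j, (max 0 (a j)) * ‖w j‖ := by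
    have hid1 := hid A 1
    simp only [one_mul] at hid1
    have hid2 : (∑ k ∈ A, (y k)^2) = ∑ j, a j * ∑ k ∈ A, y k * max 0 ⟪w j, x k⟫ := by
      rw [← hid1]; apply Finset.sum_congr rfl; intro k _; ring
    exact side A y a (fun k hk => by simp [hA] at hk; exact hk.le) hid2 hSppos
  have h2 : Real.sqrt Sm ≤ ∑ j, (max 0 (-a j)) * ‖w j‖ := by
    have hid1 := hid B (-1)
    simp only [neg_one_mul] at hid1
    have hc : ∀ k ∈ B, 0 ≤ -y k := by
      intro k hk; simp [hB] at hk; linarith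
    have hid2 : (∑ k ∈ B, (-y k)^2)
        = ∑ j, (-a j) * ∑ k ∈ B, (-y k) * max 0 ⟪w j, x k⟫ := by
      rw [← hid1]; apply Finset.sum_congr rfl; intro k _; ring
    have hpos2 : 0 < ∑ k ∈ B, (-y k)^2 := by
      simpa [neg_sq] using hSmpos
    have := side B (fun k => -y k) (fun j => -a j) hc hid2 hpos2
    simpa [neg_sq] using this
  -- combine
  have habs : ∀ j, (max 0 (a j)) + (max 0 (-a j)) = |a j| := by
    intro j
    rcases le_total (a j) 0 with h | h
    · rw [max_eq_left h, abs_of_nonpos h, max_eq_right (by linarith), zero_add]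
    · rw [max_eq_right h, abs_of_nonneg h, max_eq_left (by linarith), add_zero]
  have hsum : Real.sqrt Sp + Real.sqrt Sm ≤ ∑ j, |a j| * ‖w j‖ := by
    calc Real.sqrt Sp + Real.sqrt Sm
        ≤ (∑ j, (max 0 (a j)) * ‖w j‖) + ∑ j, (max 0 (-a j)) * ‖w j‖ :=
          add_le_add h1 h2
      _ = ∑ j, ((max 0 (a j)) + (max 0 (-a j))) * ‖w j‖ := by
          rw [← Finset.sum_add_distrib]
          apply Finset.sum_congr rfl; intro j _; ring
      _ = ∑ j, |a j| * ‖w j‖ := by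
          apply Finset.sum_congr rfl; intro j _; rw [habs]
  have heq : ∀ j, |a j| * ‖w j‖ = (a j)^2 := by
    intro j; rw [← hbal j, ← sq_abs, sq]
  have heq2 : ∀ j, ‖w j‖^2 = (a j)^2 := by
    intro j; rw [← hbal j, sq_abs]
  have hsum2 : Real.sqrt Sp + Real.sqrt Sm ≤ ∑ j, (a j)^2 := by
    calc Real.sqrt Sp + Real.sqrt Sm ≤ ∑ j, |a j| * ‖w j‖ := hsum
      _ = ∑ j, (a j)^2 := Finset.sum_congr rfl fun j _ => heq j
  have hw : (∑ j, ‖w j‖^2) = ∑ j, (a j)^2 := Finset.sum_congr rfl fun j _ => heq2 j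
  rw [hw]
  linarith
end

section
/- Let L : ℝ^N → [0,∞) be continuously differentiable, θ₀ ∈ ℝ^N, r > 0, and suppose inf_{θ ∈ B(θ₀, r)} ‖∇L(θ)‖²/L(θ) ≥ L(θ₀)/r² · 4 (with the convention that the quotient is +∞ when L(θ) = 0). Then the gradient flow θ(t) started at θ₀ remains in B(θ₀, r) for all time and L(θ(t)) → 0 as t → ∞; moreover L(θ(t)) ≤ L(θ₀)·e^{-μt} where μ = inf_{B(θ₀,r)} ‖∇L‖²/L. -/
open Filter Metric

/-- Local PL condition implies the gradient flow stays in the ball and the loss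
converges to zero exponentially fast (after Chatterjee, 2022). -/
theorem local_PL_implies_convergence {N : ℕ}
    (L : EuclideanSpace ℝ (Fin N) → ℝ)
    (hL : ContDiff ℝ 1 L) (hLpos : ∀ θ, 0 ≤ L θ)
    (θ₀ : EuclideanSpace ℝ (Fin N)) (r : ℝ) (hr : 0 < r)
    (μ : ℝ) (hμ : 0 < μ)
    (hPL : ∀ θ' ∈ closedBall θ₀ r, μ * L θ' ≤ ‖gradient L θ'‖ ^ 2)
    (hinit : 4 * L θ₀ ≤ μ * r ^ 2)
    (θ : ℝ → EuclideanSpace ℝ (Fin N))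
    (hflow : ∀ t, HasDerivAt θ (-gradient L (θ t)) t)
    (h0 : θ 0 = θ₀) :
    (∀ t ≥ (0 : ℝ), θ t ∈ closedBall θ₀ r) ∧
    Tendsto (fun t => L (θ t)) atTop (nhds 0) ∧
    (∀ t ≥ (0 : ℝ), L (θ t) ≤ L θ₀ * Real.exp (-μ * t)) := by
  have hμs : (0 : ℝ) < Real.sqrt μ := Real.sqrt_pos.2 hμ
  set f : ℝ → ℝ := fun t => L (θ t) with hf_def
  -- derivative of the loss along the flow
  have hderiv : ∀ t, HasDerivAt f (-‖gradient L (θ t)‖ ^ 2) t := by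
    intro t
    have hg : HasGradientAt L (gradient L (θ t)) (θ t) :=
      ((hL.differentiable one_ne_zero) (θ t)).hasGradientAt
    have hF : HasFDerivAt L (InnerProductSpace.toDual ℝ _ (gradient L (θ t))) (θ t) :=
      hg.hasFDerivAt
    have := hF.comp_hasDerivAt t (hflow t)
    refine this.congr_deriv ?_
    rw [InnerProductSpace.toDual_apply_apply, inner_neg_right, real_inner_self_eq_norm_sq]
  have hfdiff : Differentiable ℝ f := fun t => (hderiv t).differentiableAt
  have hfcont : Continuous f := hfdiff.continuous
  have hθdiff : Differentiable ℝ θ := fun t => (hflow t).differentiableAt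
  have hθcont : Continuous θ := hθdiff.continuous
  -- the loss is nonincreasing along the flow
  have hfanti : Antitone f := by
    refine antitone_of_deriv_nonpos hfdiff fun t => ?_
    rw [(hderiv t).deriv]
    have := sq_nonneg ‖gradient L (θ t)‖
    linarith
  have hf0 : f 0 = L θ₀ := by rw [hf_def]; simp [h0]
  have hfnonneg : ∀ t, 0 ≤ f t := fun t => hLpos (θ t)
  -- if the loss vanishes, the gradient vanishes
  have hgradzero : ∀ t, f t = 0 → gradient L (θ t) = 0 := by
    intro t ht
    have hmin : IsLocalMin L (θ t) := by
      apply IsMinOn.isLocalMin (s := Set.univ)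
      · intro y _
        simp only [Set.mem_setOf_eq]
        rw [show L (θ t) = 0 from ht]
        exact hLpos y
      · exact Filter.univ_mem
    have : fderiv ℝ L (θ t) = 0 := hmin.fderiv_eq_zero
    simp [gradient, this]
  -- Key length estimate: if the flow stays in the ball on [0,T] and f T > 0,
  -- then the flow at time T is strictly inside the ball.
  have hkey : ∀ T : ℝ, 0 ≤ T → (∀ s ∈ Set.Icc (0:ℝ) T, θ s ∈ closedBall θ₀ r) →
      0 < f T → dist (θ T) θ₀ < r := by
    intro T hT hball hfT
    set c : ℝ := 2 / Real.sqrt μ with hc_def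
    have hc : 0 < c := by positivity
    set g : ℝ → ℝ := fun t => Real.sqrt (f t) with hg_def
    have hfpos : ∀ x ∈ Set.Icc (0:ℝ) T, 0 < f x := fun x hx =>
      lt_of_lt_of_le hfT (hfanti hx.2)
    have hgcont : Continuous g := Real.continuous_sqrt.comp hfcont
    -- apply the fencing theorem with F t = θ t - θ₀ and B t = c * (g 0 - g t)
    have main : ∀ ⦃x⦄, x ∈ Set.Icc (0:ℝ) T →
        ‖θ x - θ₀‖ ≤ (fun t => c * (g 0 - g t)) x := by
      refine image_norm_le_of_norm_deriv_right_le_deriv_boundary'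
        (f := fun t => θ t - θ₀) (f' := fun t => -gradient L (θ t))
        (B := fun t => c * (g 0 - g t))
        (B' := fun x => c * (1 / (2 * g x) * ‖gradient L (θ x)‖ ^ 2))
        ?_ ?_ ?_ ?_ ?_ ?_
      · exact (hθcont.sub continuous_const).continuousOn
      · intro x _
        exact ((hflow x).sub_const θ₀).hasDerivWithinAt
      · simp [h0]
      · exact (continuous_const.mul (continuous_const.sub hgcont)).continuousOn
      · intro x hx
        have hxIcc : x ∈ Set.Icc (0:ℝ) T := ⟨hx.1, hx.2.le⟩
        have hfx : f x ≠ 0 := (hfpos x hxIcc).ne'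
        have hgx : HasDerivAt g (1 / (2 * Real.sqrt (f x)) * (-‖gradient L (θ x)‖ ^ 2)) x :=
          (Real.hasDerivAt_sqrt hfx).comp x (hderiv x)
        have : HasDerivAt (fun t => c * (g 0 - g t))
            (c * (1 / (2 * g x) * ‖gradient L (θ x)‖ ^ 2)) x := by
          have := (hgx.const_sub (g 0)).const_mul c
          refine this.congr_deriv ?_
          ring
        exact this.hasDerivWithinAt
      · intro x hx
        show ‖-gradient L (θ x)‖ ≤ c * (1 / (2 * g x) * ‖gradient L (θ x)‖ ^ 2)
        have hxIcc : x ∈ Set.Icc (0:ℝ) T := ⟨hx.1, hx.2.le⟩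
        have hfx : 0 < f x := hfpos x hxIcc
        have hgx : 0 < g x := Real.sqrt_pos.2 hfx
        set n : ℝ := ‖gradient L (θ x)‖ with hn_def
        have hPLx : μ * f x ≤ n ^ 2 := hPL (θ x) (hball x hxIcc)
        have hs : Real.sqrt (μ * f x) ≤ n := by
          have h1 : Real.sqrt (μ * f x) ≤ Real.sqrt (n ^ 2) := Real.sqrt_le_sqrt hPLx
          rwa [Real.sqrt_sq (norm_nonneg _)] at h1
        have hsval : Real.sqrt (μ * f x) = Real.sqrt μ * g x := by
          rw [hg_def]; exact Real.sqrt_mul hμ.le _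
        have hspos : 0 < Real.sqrt (μ * f x) := Real.sqrt_pos.2 (by positivity)
        have hnpos : 0 < n := lt_of_lt_of_le hspos hs
        rw [norm_neg]
        have hrhs : c * (1 / (2 * g x) * n ^ 2) = n ^ 2 / (Real.sqrt μ * g x) := by
          rw [hc_def]; field_simp
        rw [← hn_def, hrhs, ← hsval, le_div_iff₀ hspos]
        nlinarith
    have hmain := main (Set.right_mem_Icc.2 hT)
    have hgT : 0 < g T := Real.sqrt_pos.2 hfT
    have hg0 : g 0 = Real.sqrt (L θ₀) := by rw [hg_def]; simp [hf0]
    have hcg0 : c * g 0 ≤ r := by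
      have h1 : Real.sqrt (4 * L θ₀) ≤ Real.sqrt (μ * r ^ 2) := Real.sqrt_le_sqrt hinit
      have h2 : Real.sqrt (4 * L θ₀) = 2 * Real.sqrt (L θ₀) := by
        rw [Real.sqrt_mul (by norm_num : (0:ℝ) ≤ 4), show (4:ℝ) = 2 ^ 2 by norm_num,
          Real.sqrt_sq (by norm_num : (0:ℝ) ≤ 2)]
      have h3 : Real.sqrt (μ * r ^ 2) = Real.sqrt μ * r := by
        rw [Real.sqrt_mul hμ.le, Real.sqrt_sq hr.le]
      rw [h2, h3] at h1
      rw [hg0, hc_def, div_mul_eq_mul_div, div_le_iff₀ hμs]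
      linarith
    have : dist (θ T) θ₀ ≤ c * (g 0 - g T) := by rwa [dist_eq_norm]
    have hlt : c * (g 0 - g T) < c * g 0 := by nlinarith
    linarith
  -- Part (a): the flow stays in the ball for all t ≥ 0
  have hball : ∀ t ≥ (0:ℝ), θ t ∈ closedBall θ₀ r := by
    by_contra hcon
    push_neg at hcon
    obtain ⟨t₁, ht₁0, ht₁⟩ := hcon
    rw [mem_closedBall, not_le] at ht₁
    set E : Set ℝ := {t | 0 ≤ t ∧ r < dist (θ t) θ₀} with hE_def
    have hEne : E.Nonempty := ⟨t₁, ht₁0, ht₁⟩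
    have hEbdd : BddBelow E := ⟨0, fun t ht => ht.1⟩
    set T : ℝ := sInf E with hT_def
    have hT0 : 0 ≤ T := le_csInf hEne fun t ht => ht.1
    have hpre : ∀ s, 0 ≤ s → s < T → dist (θ s) θ₀ ≤ r := by
      intro s hs0 hsT
      by_contra h
      push_neg at h
      exact absurd (csInf_le hEbdd ⟨hs0, h⟩) (not_le.2 hsT)
    have hTle : dist (θ T) θ₀ ≤ r := by
      rcases eq_or_lt_of_le hT0 with hT0' | hT0'
      · rw [← hT0', h0]; simp [hr.le]
      · have htendsto : Tendsto (fun s => dist (θ s) θ₀) (nhdsWithin T (Set.Iio T))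
            (nhds (dist (θ T) θ₀)) :=
          ((hθcont.dist continuous_const).tendsto T).mono_left nhdsWithin_le_nhds
        refine le_of_tendsto htendsto ?_
        filter_upwards [Ioo_mem_nhdsLT_of_mem (Set.mem_Ioc.2 ⟨hT0', le_rfl⟩)] with s hs
        exact hpre s hs.1.le hs.2
    have hIcc : ∀ s ∈ Set.Icc (0:ℝ) T, θ s ∈ closedBall θ₀ r := by
      intro s hs
      rcases eq_or_lt_of_le hs.2 with h | h
      · rw [mem_closedBall, h]; exact hTle
      · exact mem_closedBall.2 (hpre s hs.1 h)
    rcases lt_or_ge 0 (f T) with hfT | hfT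
    · -- strictly inside the ball at time T, contradicting T = inf E
      have hlt : dist (θ T) θ₀ < r := hkey T hT0 hIcc hfT
      have hcont : ContinuousAt (fun s => dist (θ s) θ₀) T :=
        (hθcont.dist continuous_const).continuousAt
      have hev : ∀ᶠ s in nhds T, dist (θ s) θ₀ < r :=
        hcont.eventually_lt continuousAt_const hlt
      obtain ⟨δ, hδ, hδball⟩ := Metric.eventually_nhds_iff.1 hev
      obtain ⟨t₂, ht₂E, ht₂lt⟩ := Real.lt_sInf_add_pos hEne hδ
      have ht₂ : T ≤ t₂ := csInf_le hEbdd ht₂E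
      have : dist (θ t₂) θ₀ < r := by
        apply hδball
        rw [Real.dist_eq, abs_lt]
        constructor <;> [linarith; linarith [ht₂lt]]
      exact absurd ht₂E.2 (not_lt.2 this.le)
    · -- the loss vanishes at time T; the flow is constant afterwards
      have hfT0 : f T = 0 := le_antisymm hfT (hfnonneg T)
      have hconst : ∀ t ≥ T, θ t = θ T := by
        intro t ht
        have hzero : ∀ s ∈ Set.Icc T t, HasDerivWithinAt θ 0 (Set.Icc T t) s := by
          intro s hs
          have hfs : f s = 0 := le_antisymm (by rw [← hfT0]; exact hfanti hs.1) (hfnonneg s)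
          have := (hflow s).hasDerivWithinAt (s := Set.Icc T t)
          rwa [hgradzero s hfs, neg_zero] at this
        have := norm_image_sub_le_of_norm_deriv_le_segment' hzero
          (C := 0) (fun s _ => by simp) t (Set.right_mem_Icc.2 ht)
        simpa [sub_eq_zero] using this
      have ht₁T : T ≤ t₁ := csInf_le hEbdd ⟨ht₁0, ht₁⟩
      have : dist (θ t₁) θ₀ ≤ r := by
        rw [hconst t₁ ht₁T]
        exact hTle
      linarith
  -- Part (c): exponential decay
  have hexp : ∀ t ≥ (0:ℝ), f t ≤ L θ₀ * Real.exp (-μ * t) := by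
    set h : ℝ → ℝ := fun t => f t * Real.exp (μ * t) with hh_def
    have hhderiv : ∀ t, HasDerivAt h
        (-‖gradient L (θ t)‖ ^ 2 * Real.exp (μ * t) + f t * (Real.exp (μ * t) * μ)) t := by
      intro t
      have he : HasDerivAt (fun t : ℝ => Real.exp (μ * t)) (Real.exp (μ * t) * μ) t := by
        simpa using ((hasDerivAt_id t).const_mul μ).exp
      exact (hderiv t).mul he
    have hanti : AntitoneOn h (Set.Ici 0) := by
      refine antitoneOn_of_deriv_nonpos (convex_Ici 0)
        ((hfcont.mul (Real.continuous_exp.comp (continuous_const.mul continuous_id))).continuousOn)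
        (fun t _ => (hhderiv t).differentiableAt.differentiableWithinAt) ?_
      intro t ht
      rw [interior_Ici] at ht
      rw [(hhderiv t).deriv]
      have hPLt : μ * f t ≤ ‖gradient L (θ t)‖ ^ 2 := hPL (θ t) (hball t ht.le)
      have hepos : 0 < Real.exp (μ * t) := Real.exp_pos _
      nlinarith
    intro t ht
    have := hanti (Set.self_mem_Ici) ht ht
    rw [hh_def] at this
    simp only [mul_zero, Real.exp_zero, mul_one] at this
    rw [hf0] at this
    have hepos : 0 < Real.exp (μ * t) := Real.exp_pos _
    rw [neg_mul, Real.exp_neg]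
    calc f t = f t * Real.exp (μ * t) * (Real.exp (μ * t))⁻¹ := by field_simp
    _ ≤ L θ₀ * (Real.exp (μ * t))⁻¹ :=
        mul_le_mul_of_nonneg_right this (by positivity)
  refine ⟨hball, ?_, hexp⟩
  -- Part (b): convergence to zero
  have htend : Tendsto (fun t => L θ₀ * Real.exp (-μ * t)) atTop (nhds 0) := by
    have h1 : Tendsto (fun t : ℝ => μ * t) atTop atTop :=
      Tendsto.const_mul_atTop hμ tendsto_id
    have h2 : Tendsto (fun t : ℝ => Real.exp (-(μ * t))) atTop (nhds 0) :=
      Real.tendsto_exp_neg_atTop_nhds_zero.comp h1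
    have := h2.const_mul (L θ₀)
    rw [mul_zero] at this
    convert this using 2 with t
    rw [neg_mul]
  refine squeeze_zero' ?_ ?_ htend
  · filter_upwards with t using hfnonneg t
  · filter_upwards [eventually_ge_atTop (0:ℝ)] with t ht using hexp t ht
end
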